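/- Every minimal separator of a graph G is contained in some potential maximal clique of G. -/

import Mathlib

open SimpleGraph Set

variable {V : Type*}

/-- Open neighborhood of a set: vertices outside `A` with a neighbor in `A`. -/
def nbhdSet (G : SimpleGraph V) (A : Set V) : Set V :=
  {v | v ∉ A ∧ ∃ u ∈ A, G.Adj u v}

/-- Union of closed neighborhoods of vertices of `X`. -/
def closedNbhd (G : SimpleGraph V) (X : Set V) : Set V :=
  X ∪ {v | ∃ u ∈ X, G.Adj u v}

/-- `A` is a connected component of `G - S`. -/
def IsCompOutside (G : SimpleGraph V) (S A : Set V) : Prop :=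
  A.Nonempty ∧ Disjoint A S ∧ (G.induce A).Connected ∧
    ∀ u ∈ A, ∀ v, v ∉ A → v ∉ S → ¬ G.Adj u v

/-- `A` is a full component of `G - S`, i.e. `N(A) = S`. -/
def IsFullComp (G : SimpleGraph V) (S A : Set V) : Prop :=
  IsCompOutside G S A ∧ nbhdSet G A = S

/-- `S` is a minimal separator: it has at least two full components. -/
def IsMinSep (G : SimpleGraph V) (S : Set V) : Prop :=
  ∃ A B : Set V, A ≠ B ∧ IsFullComp G S A ∧ IsFullComp G S B

/-- `f` is an induced copy of the path on `k` vertices in `G`. -/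
def IsInducedPathMap (G : SimpleGraph V) {k : ℕ} (f : Fin k ↪ V) : Prop :=
  ∀ i j : Fin k, G.Adj (f i) (f j) ↔ ((i : ℕ) + 1 = (j : ℕ) ∨ (j : ℕ) + 1 = (i : ℕ))

/-- `G` is `P_t`-free: no induced path on `t` vertices. -/
def PFree (t : ℕ) (G : SimpleGraph V) : Prop :=
  ¬ ∃ f : Fin t ↪ V, IsInducedPathMap G f

/-- `Ω` is a potential maximal clique. -/
def IsPMC (G : SimpleGraph V) (Ω : Set V) : Prop :=
  (∀ D : Set V, IsCompOutside G Ω D → nbhdSet G D ≠ Ω) ∧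
  (∀ u ∈ Ω, ∀ v ∈ Ω, u ≠ v → ¬ G.Adj u v →
    ∃ D : Set V, IsCompOutside G Ω D ∧ u ∈ nbhdSet G D ∧ v ∈ nbhdSet G D)

/-! ### side graph and components -/

/-- The graph `G - S`: edges of `G` with both endpoints outside `S`. -/
def sideG (G : SimpleGraph V) (S : Set V) : SimpleGraph V where
  Adj x y := G.Adj x y ∧ x ∉ S ∧ y ∉ S
  symm := ⟨fun x y ⟨h, hx, hy⟩ => ⟨h.symm, hy, hx⟩⟩
  loopless := ⟨fun x ⟨h, _, _⟩ => G.irrefl h⟩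

lemma sideG_adj {G : SimpleGraph V} {S : Set V} {x y : V} :
    (sideG G S).Adj x y ↔ G.Adj x y ∧ x ∉ S ∧ y ∉ S := Iff.rfl

/-- The component of `x` in `G - S`. -/
def compOut (G : SimpleGraph V) (S : Set V) (x : V) : Set V :=
  {y | (sideG G S).Reachable x y}

lemma mem_compOut_self (G : SimpleGraph V) (S : Set V) (x : V) : x ∈ compOut G S x :=
  Reachable.refl x

lemma sideG_walk_not_mem {G : SimpleGraph V} {S : Set V} {x y : V}
    (w : (sideG G S).Walk x y) : y = x ∨ y ∉ S := by
  induction w with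
  | nil => exact Or.inl rfl
  | cons h p ih =>
    rcases ih with h1 | h1
    · exact Or.inr (h1 ▸ h.2.2)
    · exact Or.inr h1

lemma compOut_not_mem_S {G : SimpleGraph V} {S : Set V} {x y : V} (hx : x ∉ S)
    (hy : y ∈ compOut G S x) : y ∉ S := by
  obtain ⟨w⟩ := hy
  rcases sideG_walk_not_mem w with h | h
  · exact h ▸ hx
  · exact h

lemma compOut_disjoint {G : SimpleGraph V} {S : Set V} {x : V} (hx : x ∉ S) :
    Disjoint (compOut G S x) S :=
  Set.disjoint_left.mpr fun _ ha => compOut_not_mem_S hx ha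

lemma compOut_closed {G : SimpleGraph V} {S : Set V} {x : V} (hx : x ∉ S) {y z : V}
    (hy : y ∈ compOut G S x) (hz : z ∉ S) (hadj : G.Adj y z) : z ∈ compOut G S x :=
  Reachable.trans hy ⟨SimpleGraph.Walk.cons ⟨hadj, compOut_not_mem_S hx hy, hz⟩ SimpleGraph.Walk.nil⟩

/-- Convert a `sideG` walk whose support lies in `C` into reachability in `G.induce C`. -/
lemma walk_to_induce_reachable {G : SimpleGraph V} {S : Set V} {C : Set V} {a b : V}
    (w : (sideG G S).Walk a b) (hsup : ∀ c ∈ w.support, c ∈ C) :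
    (G.induce C).Reachable ⟨a, hsup a w.start_mem_support⟩ ⟨b, hsup b w.end_mem_support⟩ := by
  induction w with
  | nil => exact Reachable.refl _
  | cons h p ih =>
    have hsup' : ∀ c ∈ p.support, c ∈ C := fun c hc => hsup c (by simp [hc])
    refine Reachable.trans ?_ (ih hsup')
    exact SimpleGraph.Adj.reachable (by exact h.1)

lemma compOut_connected {G : SimpleGraph V} {S : Set V} {x : V} (hx : x ∉ S) :
    (G.induce (compOut G S x)).Connected := by
  classical
  rw [SimpleGraph.connected_iff]
  constructor
  · rintro ⟨a, ha⟩ ⟨b, hb⟩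
    obtain ⟨wa⟩ := ha
    obtain ⟨wb⟩ := hb
    have hsa : ∀ c ∈ wa.support, c ∈ compOut G S x := by
      intro c hc
      exact ⟨wa.takeUntil c hc⟩
    have hsb : ∀ c ∈ wb.support, c ∈ compOut G S x := by
      intro c hc
      exact ⟨wb.takeUntil c hc⟩
    exact ((walk_to_induce_reachable wa hsa).symm.trans (walk_to_induce_reachable wb hsb))
  · exact ⟨⟨x, mem_compOut_self G S x⟩⟩

lemma isCompOutside_compOut {G : SimpleGraph V} {S : Set V} {x : V} (hx : x ∉ S) :
    IsCompOutside G S (compOut G S x) := by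
  refine ⟨⟨x, mem_compOut_self G S x⟩, compOut_disjoint hx, compOut_connected hx, ?_⟩
  intro u hu v hv hvS hadj
  exact hv (compOut_closed hx hu hvS hadj)

/-- An induced walk projects to a `sideG` walk when the set avoids `S`. -/
lemma induce_reachable_to_sideG {G : SimpleGraph V} {S A : Set V} (hA : Disjoint A S)
    {a b : A} (h : (G.induce A).Reachable a b) : (sideG G S).Reachable a.1 b.1 := by
  obtain ⟨w⟩ := h
  induction w with
  | nil => exact Reachable.refl _
  | cons h p ih =>
    refine Reachable.trans ?_ ih
    rename_i u v _
    exact SimpleGraph.Adj.reachable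
      ⟨h, Set.disjoint_left.mp hA u.2, Set.disjoint_left.mp hA v.2⟩

lemma sideG_walk_stay {G : SimpleGraph V} {S A : Set V}
    (hclosed : ∀ u ∈ A, ∀ v, v ∉ A → v ∉ S → ¬ G.Adj u v)
    {x y : V} (w : (sideG G S).Walk x y) (hx : x ∈ A) : y ∈ A := by
  induction w with
  | nil => exact hx
  | cons h p ih =>
    refine ih ?_
    rename_i u v _
    by_contra hvA
    exact hclosed u hx v hvA h.2.2 h.1

lemma IsCompOutside.eq_compOut {G : SimpleGraph V} {S A : Set V}
    (hA : IsCompOutside G S A) {x : V} (hx : x ∈ A) : A = compOut G S x := by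
  obtain ⟨hne, hdisj, hconn, hclosed⟩ := hA
  apply Set.eq_of_subset_of_subset
  · intro a ha
    exact induce_reachable_to_sideG hdisj (hconn.preconnected ⟨x, hx⟩ ⟨a, ha⟩)
  · intro y hy
    obtain ⟨w⟩ := hy
    exact sideG_walk_stay hclosed w hx

/-- Two components that meet are equal. -/
lemma IsCompOutside.eq_of_mem {G : SimpleGraph V} {S A B : Set V}
    (hA : IsCompOutside G S A) (hB : IsCompOutside G S B) {x : V}
    (hxA : x ∈ A) (hxB : x ∈ B) : A = B := by
  rw [hA.eq_compOut hxA, hB.eq_compOut hxB]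

/-- Reachability is monotone when removing a smaller set. -/
lemma sideG_reachable_mono {G : SimpleGraph V} {S T : Set V} (hST : S ⊆ T) {x y : V}
    (w : (sideG G T).Walk x y) : (sideG G S).Reachable x y := by
  induction w with
  | nil => exact Reachable.refl _
  | cons h p ih =>
    exact Reachable.trans
      (SimpleGraph.Adj.reachable ⟨h.1, fun hs => h.2.1 (hST hs), fun hs => h.2.2 (hST hs)⟩) ih

lemma compOut_mono {G : SimpleGraph V} {S T : Set V} (hST : S ⊆ T) (x : V) :
    compOut G T x ⊆ compOut G S x := by
  intro y hy
  obtain ⟨w⟩ := hy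
  exact sideG_reachable_mono hST w

/-- A connected set meeting a component and avoiding `S` is inside the component. -/
lemma IsCompOutside.subset_of_connected {G : SimpleGraph V} {S A K : Set V}
    (hA : IsCompOutside G S A) (hK : (G.induce K).Connected) (hdisj : Disjoint K S)
    {x : V} (hxK : x ∈ K) (hxA : x ∈ A) : K ⊆ A := by
  rw [hA.eq_compOut hxA]
  intro k hk
  exact induce_reachable_to_sideG hdisj (hK.preconnected ⟨x, hxK⟩ ⟨k, hk⟩)

lemma cross_edge_aux {G : SimpleGraph V} {A K : Set V} {u v : A}
    (w : (G.induce A).Walk u v) (hv : v.1 ∈ K) :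
    u.1 ∉ K → ∃ a ∈ K, ∃ b ∈ A \ K, G.Adj a b := by
  induction w with
  | nil => exact fun hu => absurd hv hu
  | cons h p ih =>
    rename_i x y _
    intro hu
    by_cases hy : y.1 ∈ K
    · exact ⟨y.1, hy, x.1, ⟨x.2, hu⟩, (h : G.Adj x.1 y.1).symm⟩
    · exact ih hv hy

/-- Cut lemma: a proper nonempty subset of a connected set has an edge leaving it. -/
lemma exists_adj_out {G : SimpleGraph V} {A K : Set V} (hconn : (G.induce A).Connected)
    (hKA : K ⊆ A) (hKne : K.Nonempty) (hrest : (A \ K).Nonempty) :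
    ∃ a ∈ K, ∃ b ∈ A \ K, G.Adj a b := by
  obtain ⟨k, hk⟩ := hKne
  obtain ⟨b, hb⟩ := hrest
  obtain ⟨w⟩ := hconn.preconnected ⟨b, hb.1⟩ ⟨k, hKA hk⟩
  exact cross_edge_aux w hk hb.2

/-! ### covering and uncovered pairs -/

def covers (G : SimpleGraph V) (Ω : Set V) (p q : V) : Prop :=
  ∃ D, IsCompOutside G Ω D ∧ p ∈ nbhdSet G D ∧ q ∈ nbhdSet G D

def uncSet (G : SimpleGraph V) (Ω : Set V) : Set (V × V) :=
  {pq | pq.1 ∈ Ω ∧ pq.2 ∈ Ω ∧ pq.1 ≠ pq.2 ∧ ¬ G.Adj pq.1 pq.2 ∧ ¬ covers G Ω pq.1 pq.2}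

def ok1 (G : SimpleGraph V) (Ω : Set V) : Prop :=
  ∀ D : Set V, IsCompOutside G Ω D → nbhdSet G D ≠ Ω

lemma isPMC_iff {G : SimpleGraph V} {Ω : Set V} :
    IsPMC G Ω ↔ ok1 G Ω ∧ uncSet G Ω = ∅ := by
  constructor
  · rintro ⟨h1, h2⟩
    refine ⟨h1, ?_⟩
    ext ⟨p, q⟩
    simp only [uncSet, Set.mem_setOf_eq, Set.mem_empty_iff_false, iff_false, not_and]
    intro hp hq hne hnadj
    obtain ⟨D, hD, hpD, hqD⟩ := h2 p hp q hq hne hnadj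
    exact fun hc => hc ⟨D, hD, hpD, hqD⟩
  · rintro ⟨h1, h2⟩
    refine ⟨h1, ?_⟩
    intro p hp q hq hne hnadj
    by_contra hc
    have : (p, q) ∈ uncSet G Ω := ⟨hp, hq, hne, hnadj, fun ⟨D, hD, h3, h4⟩ => hc ⟨D, hD, h3, h4⟩⟩
    rw [h2] at this
    exact this

lemma mem_nbhdSet {G : SimpleGraph V} {A : Set V} {x : V} :
    x ∈ nbhdSet G A ↔ x ∉ A ∧ ∃ u ∈ A, G.Adj u x := Iff.rfl

lemma IsCompOutside.nbhd_subset {G : SimpleGraph V} {S A : Set V}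
    (hA : IsCompOutside G S A) : nbhdSet G A ⊆ S := by
  rintro x ⟨hxA, u, huA, hadj⟩
  by_contra hxS
  exact hA.2.2.2 u huA x hxA hxS hadj

/-- A component outside `T` disjoint from a bigger set `Ω ⊇ T` is a component outside `Ω`. -/
lemma IsCompOutside.transfer {G : SimpleGraph V} {T Ω A : Set V}
    (hA : IsCompOutside G T A) (hTΩ : T ⊆ Ω) (hdisj : Disjoint A Ω) :
    IsCompOutside G Ω A := by
  refine ⟨hA.1, hdisj, hA.2.2.1, ?_⟩
  intro u hu v hv hvΩ
  exact hA.2.2.2 u hu v hv (fun hvT => hvΩ (hTΩ hvT))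

/-- Coverage is monotone under shrinking `Ω`. -/
lemma covers_mono {G : SimpleGraph V} {Ω Ω' : Set V} (hsub : Ω' ⊆ Ω) {p q : V}
    (hp : p ∈ Ω') (hq : q ∈ Ω') (h : covers G Ω p q) : covers G Ω' p q := by
  obtain ⟨D, hD, ⟨hpD, u, huD, hup⟩, ⟨hqD, w, hwD, hwq⟩⟩ := h
  obtain ⟨d, hd⟩ := hD.1
  have hdΩ' : d ∉ Ω' := fun hc => (Set.disjoint_left.mp hD.2.1) hd (hsub hc)
  have hDsub : D ⊆ compOut G Ω' d := by
    rw [hD.eq_compOut hd]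
    exact compOut_mono hsub d
  have hK := isCompOutside_compOut (G := G) hdΩ'
  refine ⟨compOut G Ω' d, hK, ⟨?_, u, hDsub huD, hup⟩, ⟨?_, w, hDsub hwD, hwq⟩⟩
  · exact fun hc => (Set.disjoint_left.mp hK.2.1) hc hp
  · exact fun hc => (Set.disjoint_left.mp hK.2.1) hc hq

lemma compOut_eq_of_mem {G : SimpleGraph V} {S : Set V} {x y : V} (hx : x ∉ S)
    (hy : y ∈ compOut G S x) : compOut G S x = compOut G S y :=
  (isCompOutside_compOut hx).eq_compOut hy

/-- Pieces lemma: if `m` lies in the component `M` of `v` in `G-(Ω\{v})`, `m ≠ v`,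
and `m` is adjacent to `x ∈ Ω`, nonadjacent to `v`, then the pair `(x,v)` is covered. -/
lemma piece_covers {G : SimpleGraph V} {Ω : Set V} {v x m : V} (hv : v ∈ Ω) (hx : x ∈ Ω)
    (hxv : x ≠ v) (hnadj : ¬ G.Adj x v) (hm : m ∈ compOut G (Ω \ {v}) v) (hmv : m ≠ v)
    (hadj : G.Adj m x) : covers G Ω x v := by
  have hvout : v ∉ Ω \ {v} := fun hc => hc.2 rfl
  have hmΩ : m ∉ Ω := by
    have := compOut_not_mem_S hvout hm
    intro hc; exact this ⟨hc, hmv⟩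
  set M := compOut G (Ω \ {v}) v with hM
  have hMcomp := isCompOutside_compOut (G := G) hvout
  set K := compOut G Ω m with hK
  have hKcomp := isCompOutside_compOut (G := G) (S := Ω) hmΩ
  have hKM : K ⊆ M := by
    have h1 : M = compOut G (Ω \ {v}) m := compOut_eq_of_mem hvout hm
    rw [h1, hK]
    exact compOut_mono (Set.diff_subset) m
  have hvK : v ∉ K := fun hc => (Set.disjoint_left.mp hKcomp.2.1) hc hv
  -- cut lemma inside M
  obtain ⟨a, haK, b, hbMK, hab⟩ := exists_adj_out hMcomp.2.2.1 hKM
    ⟨m, mem_compOut_self G Ω m⟩ ⟨v, mem_compOut_self G (Ω \ {v}) v, hvK⟩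
  have hbK : b ∈ nbhdSet G K := ⟨hbMK.2, a, haK, hab⟩
  have hbΩ : b ∈ Ω := hKcomp.nbhd_subset hbK
  have hbv : b = v := by
    have := compOut_not_mem_S hvout hbMK.1
    by_contra hne
    exact this ⟨hbΩ, hne⟩
  refine ⟨K, hKcomp, ⟨?_, m, mem_compOut_self G Ω m, hadj⟩, hbv ▸ hbK⟩
  exact fun hc => (Set.disjoint_left.mp hKcomp.2.1) hc hx

lemma covers_symm {G : SimpleGraph V} {Ω : Set V} {p q : V} (h : covers G Ω p q) :
    covers G Ω q p := by
  obtain ⟨D, h1, h2, h3⟩ := h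
  exact ⟨D, h1, h3, h2⟩

/-- Generalized pieces lemma. `AA` is a connected closed set w.r.t. `T ⊆ Ω` meeting `Ω`
only in `v`; any `G`-neighbor `m ≠ v` of `x ∈ Ω` inside `AA` yields a cover of `(x,v)`. -/
lemma general_piece {G : SimpleGraph V} {Ω T AA : Set V} {v x m : V}
    (hT : T ⊆ Ω) (hAA : IsCompOutside G T AA) (hAAΩ : AA ∩ Ω ⊆ {v})
    (hv : v ∈ AA) (hvΩ : v ∈ Ω) (hx : x ∈ Ω) (hxv : x ≠ v) (hnadj : ¬ G.Adj x v)
    (hm : m ∈ AA) (hmv : m ≠ v) (hadj : G.Adj m x) : covers G Ω x v := by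
  have hmΩ : m ∉ Ω := fun hc => hmv (hAAΩ ⟨hm, hc⟩)
  set K := compOut G Ω m with hK
  have hKcomp := isCompOutside_compOut (G := G) (S := Ω) hmΩ
  have hKAA : K ⊆ AA := by
    refine hAA.subset_of_connected hKcomp.2.2.1 ?_ (mem_compOut_self G Ω m) hm
    exact Set.disjoint_left.mpr fun y hy hyT =>
      (Set.disjoint_left.mp hKcomp.2.1) hy (hT hyT)
  have hvK : v ∉ K := fun hc => (Set.disjoint_left.mp hKcomp.2.1) hc hvΩ
  obtain ⟨a, haK, b, hbMK, hab⟩ := exists_adj_out hAA.2.2.1 hKAA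
    ⟨m, mem_compOut_self G Ω m⟩ ⟨v, hv, hvK⟩
  have hbK : b ∈ nbhdSet G K := ⟨hbMK.2, a, haK, hab⟩
  have hbΩ : b ∈ Ω := hKcomp.nbhd_subset hbK
  have hbv : b = v := hAAΩ ⟨hbMK.1, hbΩ⟩
  refine ⟨K, hKcomp, ⟨?_, m, mem_compOut_self G Ω m, hadj⟩, hbv ▸ hbK⟩
  exact fun hc => (Set.disjoint_left.mp hKcomp.2.1) hc hx

/-- Removal analysis: in a stuck situation the failure of condition (1) for `Ω \ {v}`
comes from a component not containing `v` whose neighborhood is all of `Ω \ {v}`. -/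
lemma removal_analysis {G : SimpleGraph V} {Ω : Set V} {v z : V}
    (hv : v ∈ Ω) (hz : z ∈ Ω) (hzv : z ≠ v) (hnadj : ¬ G.Adj z v)
    (huncov : ¬ covers G Ω z v) (hfail : ¬ ok1 G (Ω \ {v})) :
    ∃ D, IsCompOutside G Ω D ∧ nbhdSet G D = Ω \ {v} ∧ v ∉ D := by
  simp only [ok1, not_forall] at hfail
  obtain ⟨K, hK, hKfull⟩ := hfail
  rw [not_not] at hKfull
  by_cases hvK : v ∈ K
  · exfalso
    have hvout : v ∉ Ω \ {v} := fun hc => hc.2 rfl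
    have hKeq : K = compOut G (Ω \ {v}) v := hK.eq_compOut hvK
    have hzK : z ∈ nbhdSet G K := hKfull ▸ ⟨hz, hzv⟩
    obtain ⟨hzK', m, hm, hmz⟩ := hzK
    have hmv : m ≠ v := by rintro rfl; exact hnadj hmz.symm
    exact huncov (general_piece (T := Ω \ {v}) Set.diff_subset
      (hKeq ▸ hK : IsCompOutside G (Ω \ {v}) (compOut G (Ω \ {v}) v))
      (by
        intro y ⟨hy1, hy2⟩
        by_contra hyne
        exact (Set.disjoint_left.mp (isCompOutside_compOut hvout).2.1) hy1 ⟨hy2, hyne⟩)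
      (hKeq ▸ hvK) hv hz hzv hnadj (hKeq ▸ hm) hmv hmz)
  · refine ⟨K, ?_, hKfull, hvK⟩
    refine hK.transfer Set.diff_subset ?_
    refine Set.disjoint_left.mpr fun y hy hyΩ => ?_
    rcases eq_or_ne y v with rfl | hne
    · exact hvK hy
    · exact (Set.disjoint_left.mp hK.2.1) hy ⟨hyΩ, hne⟩

/-- Characterization of the neighborhood of the component `M` of `v` in `G - (Ω \ {v})`. -/
lemma M_nbhd {G : SimpleGraph V} {Ω : Set V} {v : V} (hv : v ∈ Ω) :
    nbhdSet G (compOut G (Ω \ {v}) v) =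
      {x | x ∈ Ω ∧ x ≠ v ∧ (G.Adj x v ∨ covers G Ω x v)} := by
  have hvout : v ∉ Ω \ {v} := fun hc => hc.2 rfl
  have hMcomp := isCompOutside_compOut (G := G) hvout
  set M := compOut G (Ω \ {v}) v with hM
  ext x
  constructor
  · intro hx
    have hxΩ : x ∈ Ω \ {v} := hMcomp.nbhd_subset hx
    obtain ⟨hxM, m, hmM, hmx⟩ := hx
    refine ⟨hxΩ.1, hxΩ.2, ?_⟩
    rcases eq_or_ne m v with rfl | hmv
    · exact Or.inl hmx.symm
    · by_cases hadjxv : G.Adj x v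
      · exact Or.inl hadjxv
      · exact Or.inr (general_piece Set.diff_subset hMcomp
          (by
            intro y ⟨hy1, hy2⟩
            by_contra hyne
            exact (Set.disjoint_left.mp hMcomp.2.1) hy1 ⟨hy2, hyne⟩)
          (mem_compOut_self _ _ _) hv hxΩ.1 hxΩ.2 hadjxv hmM hmv hmx)
  · rintro ⟨hxΩ, hxv, hcase⟩
    have hxM : x ∉ M := fun hc =>
      (Set.disjoint_left.mp hMcomp.2.1) hc ⟨hxΩ, hxv⟩
    rcases hcase with hadj | hcov
    · exact ⟨hxM, v, mem_compOut_self _ _ _, hadj.symm⟩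
    · obtain ⟨D', hD', hxD', hvD'⟩ := hcov
      obtain ⟨hvD'', d, hdD', hdv⟩ := hvD'
      have hdM : d ∈ M := by
        refine compOut_closed hvout (mem_compOut_self _ _ _) ?_ hdv.symm
        intro hc
        exact (Set.disjoint_left.mp hD'.2.1) hdD' hc.1
      have hD'M : D' ⊆ M := by
        refine hMcomp.subset_of_connected hD'.2.2.1 ?_ hdD' hdM
        exact Set.disjoint_left.mpr fun y hy hyT =>
          (Set.disjoint_left.mp hD'.2.1) hy hyT.1
      obtain ⟨hxD'', u, huD', hux⟩ := hxD'
      exact ⟨hxM, u, hD'M huD', hux⟩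

/-- Removing a vertex can only shrink the uncovered set. -/
lemma uncSet_removal_subset {G : SimpleGraph V} {Ω : Set V} {v : V} :
    uncSet G (Ω \ {v}) ⊆ uncSet G Ω := by
  rintro ⟨p, q⟩ ⟨hp, hq, hne, hnadj, hncov⟩
  refine ⟨hp.1, hq.1, hne, hnadj, fun hcov => hncov ?_⟩
  exact covers_mono Set.diff_subset hp hq hcov

/-! ### vertex deletion via `sideG G {v}` -/

lemma delG_le {G : SimpleGraph V} {v : V} : sideG G {v} ≤ G := fun _ _ h => h.1

lemma delG_adj {G : SimpleGraph V} {v x y : V} :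
    (sideG G {v}).Adj x y ↔ G.Adj x y ∧ x ≠ v ∧ y ≠ v := by
  simp [sideG_adj]

lemma delG_induce_eq {G : SimpleGraph V} {v : V} {P : Set V} (hvP : v ∉ P) :
    (sideG G {v}).induce P = G.induce P := by
  ext ⟨x, hx⟩ ⟨y, hy⟩
  simp only [comap_adj, Function.Embedding.coe_subtype]
  rw [delG_adj]
  constructor
  · exact fun h => h.1
  · intro h
    exact ⟨h, fun hc => hvP (hc ▸ hx), fun hc => hvP (hc ▸ hy)⟩

lemma delG_nbhdSet {G : SimpleGraph V} {v : V} {P : Set V} (hvP : v ∉ P) :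
    nbhdSet (sideG G {v}) P = nbhdSet G P \ {v} := by
  ext x
  simp only [mem_nbhdSet, Set.mem_diff, Set.mem_singleton_iff]
  constructor
  · rintro ⟨hx, u, hu, hadj⟩
    rw [delG_adj] at hadj
    exact ⟨⟨hx, u, hu, hadj.1⟩, hadj.2.2⟩
  · rintro ⟨⟨hx, u, hu, hadj⟩, hxv⟩
    exact ⟨hx, u, hu, delG_adj.mpr ⟨hadj, fun hc => hvP (hc ▸ hu), hxv⟩⟩

/-- Transfer of components from `G` with `v ∉ N[P]` to the deleted graph. -/
lemma delG_comp_of_comp {G : SimpleGraph V} {v : V} {Y P : Set V}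
    (hP : IsCompOutside G Y P) (hvP : v ∉ P) :
    IsCompOutside (sideG G {v}) Y P := by
  refine ⟨hP.1, hP.2.1, ?_, ?_⟩
  · rw [delG_induce_eq hvP]; exact hP.2.2.1
  · intro u hu y hy hyY hadj
    exact hP.2.2.2 u hu y hy hyY hadj.1

/-- Transfer of components from the deleted graph back to `G`,
assuming `v` is not a `G`-neighbor of `P`. -/
lemma comp_of_delG_comp {G : SimpleGraph V} {v : V} {Y P : Set V}
    (hP : IsCompOutside (sideG G {v}) Y P) (hvP : v ∉ P) (hvN : v ∉ nbhdSet G P) :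
    IsCompOutside G Y P := by
  refine ⟨hP.1, hP.2.1, ?_, ?_⟩
  · rw [← delG_induce_eq hvP]; exact hP.2.2.1
  · intro u hu y hy hyY hadj
    rcases eq_or_ne y v with rfl | hne
    · exact hvN ⟨hvP, u, hu, hadj⟩
    · exact hP.2.2.2 u hu y hy hyY
        (delG_adj.mpr ⟨hadj, fun hc => hvP (hc ▸ hu), hne⟩)

/-- In the deleted graph, a component containing `v` is `{v}` (it is isolated). -/
lemma delG_comp_mem_v {G : SimpleGraph V} {v : V} {Y P : Set V}
    (hP : IsCompOutside (sideG G {v}) Y P) (hvP : v ∈ P) : P = {v} := by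
  apply Set.eq_of_subset_of_subset
  · intro k hk
    obtain ⟨w⟩ := hP.2.2.1.preconnected ⟨v, hvP⟩ ⟨k, hk⟩
    cases w with
    | nil => rfl
    | cons h p => exact absurd rfl ((delG_adj.mp h).2.1)
  · rintro x rfl; exact hvP

/-! ### measure and minimizer -/

lemma exists_min_of_nonempty {α : Type*} {P : α → Prop} (hne : ∃ a, P a) (f : α → ℕ) :
    ∃ a, P a ∧ ∀ b, P b → f a ≤ f b := by
  have h1 : {n | ∃ a, P a ∧ f a = n}.Nonempty := by
    obtain ⟨a, ha⟩ := hne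
    exact ⟨f a, a, ha, rfl⟩
  obtain ⟨a, ha, hfa⟩ := Nat.sInf_mem h1
  exact ⟨a, ha, fun b hb => hfa ▸ Nat.sInf_le ⟨b, hb, rfl⟩⟩

lemma lex_measure_lt {n u c u' c' : ℕ} (hc' : c' ≤ n)
    (h : u' < u ∨ (u' = u ∧ c' < c)) : u' * (n + 1) + c' < u * (n + 1) + c := by
  rcases h with h | ⟨rfl, h⟩
  · calc u' * (n + 1) + c' < u' * (n + 1) + (n + 1) := by omega
    _ = (u' + 1) * (n + 1) := by ring
    _ ≤ u * (n + 1) := Nat.mul_le_mul_right _ h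
    _ ≤ u * (n + 1) + c := Nat.le_add_right _ _
  · omega

lemma ncard_le_card [Fintype V] (Ω : Set V) : Ω.ncard ≤ Fintype.card V := by
  have := Set.ncard_le_ncard (Set.subset_univ Ω) (Set.toFinite _)
  rwa [Set.ncard_univ, Nat.card_eq_fintype_card] at this

/-! ### family lemmas -/

lemma base_ok1 {G : SimpleGraph V} {S A : Set V} (hA : IsCompOutside G S A) :
    ok1 G (S ∪ A) := by
  intro P hP hfull
  obtain ⟨a, haA⟩ := hA.1
  have haP : a ∈ nbhdSet G P := hfull ▸ Set.mem_union_right S haA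
  obtain ⟨haP', p, hpP, hpa⟩ := haP
  have hpSA : p ∉ S ∪ A := Set.disjoint_left.mp hP.2.1 hpP
  exact hA.2.2.2 a haA p (fun hc => hpSA (Set.mem_union_right S hc))
    (fun hc => hpSA (Set.mem_union_left A hc)) hpa.symm

lemma B_comp_of_mem_fam {G : SimpleGraph V} {S A B Ω : Set V}
    (hA : IsCompOutside G S A) (hB : IsCompOutside G S B) (hAB : A ≠ B)
    (hSΩ : S ⊆ Ω) (hΩ : Ω ⊆ S ∪ A) : IsCompOutside G Ω B := by
  have hdisjAB : Disjoint B A := by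
    refine Set.disjoint_left.mpr fun x hxB hxA => hAB ?_
    exact hA.eq_of_mem hB hxA hxB
  refine hB.transfer hSΩ ?_
  refine Set.disjoint_left.mpr fun y hy hyΩ => ?_
  rcases hΩ hyΩ with h | h
  · exact (Set.disjoint_left.mp hB.2.1) hy h
  · exact (Set.disjoint_left.mp hdisjAB) hy h

lemma S_pairs_covered {G : SimpleGraph V} {S A B Ω : Set V}
    (hA : IsCompOutside G S A) (hB : IsFullComp G S B) (hAB : A ≠ B)
    (hSΩ : S ⊆ Ω) (hΩ : Ω ⊆ S ∪ A) {p q : V} (hp : p ∈ S) (hq : q ∈ S) :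
    covers G Ω p q := by
  have hBc := B_comp_of_mem_fam hA hB.1 hAB hSΩ hΩ
  exact ⟨B, hBc, hB.2 ▸ hp, hB.2 ▸ hq⟩

/-- The singleton situation: if `Ω ∩ A ⊆ {v}`, every nonadjacent pair `(z,v)` is covered. -/
lemma singleton_covers {G : SimpleGraph V} {S A Ω : Set V} {z v : V}
    (hA : IsFullComp G S A) (hSΩ : S ⊆ Ω) (hΩ : Ω ⊆ S ∪ A)
    (hsing : Ω ∩ A ⊆ {v}) (hvA : v ∈ A) (hvΩ : v ∈ Ω)
    (hz : z ∈ Ω) (hzv : z ≠ v) (hnadj : ¬ G.Adj z v) : covers G Ω z v := by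
  have hzS : z ∈ S := by
    rcases hΩ hz with h | h
    · exact h
    · exact absurd (hsing ⟨hz, h⟩) hzv
  have hzN : z ∈ nbhdSet G A := hA.2 ▸ hzS
  obtain ⟨hzA, a, haA, haz⟩ := hzN
  have hav : a ≠ v := by rintro rfl; exact hnadj haz.symm
  refine general_piece hSΩ hA.1 (fun y hy => hsing ⟨hy.2, hy.1⟩) hvA hvΩ hz hzv hnadj haA hav haz

/-! ### lifting PMCs across vertex deletion -/

lemma delG_comp_not_mem_v {G : SimpleGraph V} {v : V} {Y K : Set V} {p : V}
    (hK : IsCompOutside (sideG G {v}) Y K) (hp : p ∈ nbhdSet (sideG G {v}) K) :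
    v ∉ K := by
  intro hvK
  have hKv : K = {v} := delG_comp_mem_v hK hvK
  obtain ⟨_, u, huK, hadj⟩ := hp
  rw [hKv, Set.mem_singleton_iff] at huK
  exact (delG_adj.mp hadj).2.1 huK

lemma delG_nbhd_subset {G : SimpleGraph V} {v : V} {K : Set V} :
    nbhdSet (sideG G {v}) K ⊆ nbhdSet G K := by
  rintro x ⟨hx, u, hu, hadj⟩
  exact ⟨hx, u, hu, (delG_adj.mp hadj).1⟩

/-- If the component of `v` is not full, the PMC of `G - v` is a PMC of `G`. -/
lemma lift_pmc_ne {G : SimpleGraph V} {v : V} {Y : Set V} (hv : v ∉ Y)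
    (hpmc : IsPMC (sideG G {v}) Y) (hF : nbhdSet G (compOut G Y v) ≠ Y) :
    IsPMC G Y := by
  have hFcomp := isCompOutside_compOut (G := G) (S := Y) hv
  constructor
  · intro P hP
    by_cases hvP : v ∈ P
    · rw [hP.eq_compOut hvP]; exact hF
    · have hvN : v ∉ nbhdSet G P := fun hc => hv (hP.nbhd_subset hc)
      have hPdel := delG_comp_of_comp hP hvP
      have := hpmc.1 P hPdel
      rwa [delG_nbhdSet hvP, Set.diff_singleton_eq_self hvN] at this
  · intro p hp q hq hne hnadj
    have hnadj' : ¬ (sideG G {v}).Adj p q := fun hc => hnadj hc.1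
    obtain ⟨K, hK, hpK, hqK⟩ := hpmc.2 p hp q hq hne hnadj'
    have hvK : v ∉ K := delG_comp_not_mem_v hK hpK
    by_cases hvN : v ∈ nbhdSet G K
    · obtain ⟨_, u, huK, huv⟩ := hvN
      have huF : u ∈ compOut G Y v := by
        refine compOut_closed hv (mem_compOut_self G Y v) ?_ huv.symm
        exact Set.disjoint_left.mp hK.2.1 huK
      have hKF : K ⊆ compOut G Y v := by
        refine hFcomp.subset_of_connected ?_ hK.2.1 huK huF
        rw [← delG_induce_eq hvK]; exact hK.2.2.1
      obtain ⟨hpK', up, hupK, hup⟩ := hpK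
      obtain ⟨hqK', uq, huqK, huq⟩ := hqK
      refine ⟨compOut G Y v, hFcomp, ⟨?_, up, hKF hupK, (delG_adj.mp hup).1⟩,
        ⟨?_, uq, hKF huqK, (delG_adj.mp huq).1⟩⟩
      · exact fun hc => (Set.disjoint_left.mp hFcomp.2.1) hc hp
      · exact fun hc => (Set.disjoint_left.mp hFcomp.2.1) hc hq
    · exact ⟨K, comp_of_delG_comp hK hvK hvN, delG_nbhd_subset hpK, delG_nbhd_subset hqK⟩

/-- If the component of `v` is full, adding `v` to the PMC of `G - v` gives a PMC of `G`. -/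
lemma lift_pmc_eq {G : SimpleGraph V} {v : V} {Y : Set V} (hv : v ∉ Y)
    (hpmc : IsPMC (sideG G {v}) Y) (hF : nbhdSet G (compOut G Y v) = Y) :
    IsPMC G (Y ∪ {v}) := by
  have hFcomp := isCompOutside_compOut (G := G) (S := Y) hv
  have hcov_pv : ∀ p ∈ Y, ¬ G.Adj p v → covers G (Y ∪ {v}) p v := by
    intro p hp hnadj
    have hpN : p ∈ nbhdSet G (compOut G Y v) := by rw [hF]; exact hp
    obtain ⟨hpF, f, hfF, hfp⟩ := hpN
    have hfv : f ≠ v := by rintro rfl; exact hnadj hfp.symm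
    refine general_piece (Set.subset_union_left) hFcomp ?_ (mem_compOut_self G Y v)
      (Set.mem_union_right Y rfl) (Set.mem_union_left _ hp) (fun hc => hv (hc ▸ hp))
      hnadj hfF hfv hfp
    rintro y ⟨hy1, hy2⟩
    rcases hy2 with hy2 | hy2
    · exact absurd hy2 (Set.disjoint_left.mp hFcomp.2.1 hy1)
    · exact hy2
  -- lifting a component of the deleted graph
  have hliftK : ∀ K, IsCompOutside (sideG G {v}) Y K → v ∉ K →
      IsCompOutside G (Y ∪ {v}) K := by
    intro K hK hvK
    refine ⟨hK.1, ?_, ?_, ?_⟩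
    · rw [Set.disjoint_union_right]
      exact ⟨hK.2.1, Set.disjoint_singleton_right.mpr hvK⟩
    · rw [← delG_induce_eq hvK]; exact hK.2.2.1
    · intro u hu y hy hyΩ hadj
      have hyv : y ≠ v := fun hc => hyΩ (hc ▸ Set.mem_union_right Y rfl)
      have hyY : y ∉ Y := fun hc => hyΩ (Set.mem_union_left _ hc)
      exact hK.2.2.2 u hu y hy hyY
        (delG_adj.mpr ⟨hadj, fun hc => hvK (hc ▸ hu), hyv⟩)
  constructor
  · intro P hP hfull
    have hvP : v ∉ P := Set.disjoint_right.mp hP.2.1 (Set.mem_union_right Y rfl)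
    have hPdel : IsCompOutside (sideG G {v}) Y P := by
      refine ⟨hP.1, ?_, ?_, ?_⟩
      · exact Set.disjoint_of_subset_right (Set.subset_union_left) hP.2.1
      · rw [delG_induce_eq hvP]; exact hP.2.2.1
      · intro u hu y hy hyY hadj
        rcases eq_or_ne y v with rfl | hne
        · exact (delG_adj.mp hadj).2.2 rfl
        · exact hP.2.2.2 u hu y hy
            (fun hc => (by
              rcases hc with hc | hc
              · exact hyY hc
              · exact hne hc : False)) hadj.1
    have h1 := hpmc.1 P hPdel
    apply h1
    rw [delG_nbhdSet hvP, hfull]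
    ext x
    simp only [Set.mem_diff, Set.mem_union, Set.mem_singleton_iff]
    constructor
    · rintro ⟨h | h, hne⟩
      · exact h
      · exact absurd h hne
    · intro hx
      exact ⟨Or.inl hx, fun hc => hv (hc ▸ hx)⟩
  · intro p hp q hq hne hnadj
    rcases hp with hp | hp
    · rcases hq with hq | hq
      · -- both in Y
        have hnadj' : ¬ (sideG G {v}).Adj p q := fun hc => hnadj hc.1
        obtain ⟨K, hK, hpK, hqK⟩ := hpmc.2 p hp q hq hne hnadj'
        have hvK : v ∉ K := delG_comp_not_mem_v hK hpK
        exact ⟨K, hliftK K hK hvK, delG_nbhd_subset hpK, delG_nbhd_subset hqK⟩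
      · -- q = v
        rw [Set.mem_singleton_iff] at hq
        subst hq
        obtain ⟨D, h1, h2, h3⟩ := hcov_pv p hp hnadj
        exact ⟨D, h1, h2, h3⟩
    · rw [Set.mem_singleton_iff] at hp
      subst hp
      rcases hq with hq | hq
      · obtain ⟨D, h1, h2, h3⟩ := hcov_pv q hq (fun hc => hnadj hc.symm)
        exact ⟨D, h1, h3, h2⟩
      · rw [Set.mem_singleton_iff] at hq
        exact absurd hq.symm hne

lemma compOut_mono_graph {G₁ G₂ : SimpleGraph V} (h : G₁ ≤ G₂) (S : Set V) (x : V) :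
    compOut G₁ S x ⊆ compOut G₂ S x := by
  intro y hy
  refine Reachable.mono ?_ hy
  intro a b hab
  exact ⟨h hab.1, hab.2⟩

lemma delG_edge_lt [Fintype V] {G : SimpleGraph V} {v b : V} (hadj : G.Adj v b) :
    (sideG G {v}).edgeSet.ncard < G.edgeSet.ncard := by
  apply Set.ncard_lt_ncard _ (Set.toFinite _)
  constructor
  · intro e he
    induction e with
    | h x y =>
      rw [SimpleGraph.mem_edgeSet] at he ⊢
      exact he.1
  · intro hcon
    have h1 : s(v, b) ∈ G.edgeSet := by rw [SimpleGraph.mem_edgeSet]; exact hadj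
    have h2 := hcon h1
    rw [SimpleGraph.mem_edgeSet] at h2
    exact h2.2.1 rfl

/-! ### the main induction -/

theorem block_pmc [Fintype V] :
    ∀ (N : ℕ) (G : SimpleGraph V) (S A B : Set V),
      G.edgeSet.ncard * (Fintype.card V + 1) + A.ncard ≤ N →
      IsFullComp G S A → IsFullComp G S B → A ≠ B →
      ∃ Ω, IsPMC G Ω ∧ S ⊆ Ω ∧ Ω ⊆ S ∪ A := by
  intro N
  induction N using Nat.strong_induction_on with
  | _ N IH =>
  intro G S A B hmeas hA hB hAB
  set n := Fintype.card V with hn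
  have hdisjAS : Disjoint A S := hA.1.2.1
  -- family of candidates and the minimizer
  have hbase : S ⊆ S ∪ A ∧ S ∪ A ⊆ S ∪ A ∧ ((S ∪ A) ∩ A).Nonempty ∧ ok1 G (S ∪ A) := by
    obtain ⟨a, ha⟩ := hA.1.1
    exact ⟨Set.subset_union_left, subset_rfl, ⟨a, Set.mem_union_right _ ha, ha⟩, base_ok1 hA.1⟩
  obtain ⟨Ω, hΩFam, hmin⟩ := exists_min_of_nonempty
    (P := fun Ω => S ⊆ Ω ∧ Ω ⊆ S ∪ A ∧ (Ω ∩ A).Nonempty ∧ ok1 G Ω)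
    ⟨S ∪ A, hbase⟩ (fun Ω => (uncSet G Ω).ncard * (n + 1) + Ω.ncard)
  obtain ⟨hSΩ, hΩSA, hΩA, hok1⟩ := hΩFam
  by_cases huncE : uncSet G Ω = ∅
  · exact ⟨Ω, isPMC_iff.mpr ⟨hok1, huncE⟩, hSΩ, hΩSA⟩
  obtain ⟨⟨p, q⟩, hp, hq, hne, hnadj, hncov⟩ := Set.nonempty_iff_ne_empty.mpr huncE
  have hnotboth : ¬(p ∈ S ∧ q ∈ S) := fun ⟨h1, h2⟩ =>
    hncov (S_pairs_covered hA.1 hB hAB hSΩ hΩSA h1 h2)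
  -- pick the pair oriented so the second member is in A
  obtain ⟨z, v, hvA, hz, hv, hzv, hnadjzv, hncovzv⟩ :
      ∃ z v, v ∈ A ∧ z ∈ Ω ∧ v ∈ Ω ∧ z ≠ v ∧ ¬ G.Adj z v ∧ ¬ covers G Ω z v := by
    rcases hΩSA hq with hqS | hqA
    · rcases hΩSA hp with hpS | hpA
      · exact absurd ⟨hpS, hqS⟩ hnotboth
      · exact ⟨q, p, hpA, hq, hp, hne.symm, fun hc => hnadj hc.symm,
          fun hc => hncov (covers_symm hc)⟩
    · exact ⟨p, q, hqA, hp, hq, hne, hnadj, hncov⟩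
  have hvS : v ∉ S := Set.disjoint_left.mp hdisjAS hvA
  -- the trace of Ω on A is not just {v}
  obtain ⟨w₀, hw₀, hw₀v⟩ : ∃ w₀, w₀ ∈ Ω ∩ A ∧ w₀ ≠ v := by
    by_contra hc
    push_neg at hc
    refine hncovzv (singleton_covers hA hSΩ hΩSA ?_ hvA hv hz hzv hnadjzv)
    intro y hy
    exact hc y hy
  -- removing v must break condition (1)
  have hfailv : ¬ ok1 G (Ω \ {v}) := by
    intro hok'
    have hmemS : S ⊆ Ω \ {v} := fun s hs => ⟨hSΩ hs, fun hc => hvS (hc ▸ hs)⟩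
    have hmem : S ⊆ Ω \ {v} ∧ Ω \ {v} ⊆ S ∪ A ∧ ((Ω \ {v}) ∩ A).Nonempty ∧
        ok1 G (Ω \ {v}) :=
      ⟨hmemS, Set.diff_subset.trans hΩSA, ⟨w₀, ⟨hw₀.1, hw₀v⟩, hw₀.2⟩, hok'⟩
    have hge := hmin _ hmem
    have hsub : uncSet G (Ω \ {v}) ⊂ uncSet G Ω := by
      refine ⟨uncSet_removal_subset, fun hcontra => ?_⟩
      have h1 : (z, v) ∈ uncSet G (Ω \ {v}) :=
        hcontra ⟨hz, hv, hzv, hnadjzv, hncovzv⟩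
      exact h1.2.1.2 rfl
    have hcard := Set.ncard_lt_ncard hsub (Set.toFinite _)
    have hlt := lex_measure_lt (n := n) (c := Ω.ncard) (c' := (Ω \ {v}).ncard)
      (ncard_le_card _) (Or.inl hcard)
    omega
  obtain ⟨D, hD, hDfull, hvD⟩ := removal_analysis hv hz hzv hnadjzv hncovzv hfailv
  have hDdisjΩ : Disjoint D Ω := hD.2.1
  have hDdisjS : Disjoint D S := Set.disjoint_of_subset_right hSΩ hDdisjΩ
  -- D ⊆ A
  have hw₀N : w₀ ∈ nbhdSet G D := by rw [hDfull]; exact ⟨hw₀.1, hw₀v⟩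
  obtain ⟨hw₀D, d₀, hd₀D, hd₀w⟩ := hw₀N
  have hd₀S : d₀ ∉ S := Set.disjoint_left.mp hDdisjS hd₀D
  have hd₀A : d₀ ∈ A := by
    by_contra hc
    exact hA.1.2.2.2 w₀ hw₀.2 d₀ hc hd₀S hd₀w.symm
  have hDA : D ⊆ A := hA.1.subset_of_connected hD.2.2.1 hDdisjS hd₀D hd₀A
  -- the set of uncovered partners of v
  by_cases hSUA : ∃ u, (u ∈ Ω ∧ u ≠ v ∧ ¬ G.Adj u v ∧ ¬ covers G Ω u v) ∧ u ∈ A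
  · -- case (a)
    obtain ⟨u, ⟨huΩ, huv, hnadjuv, hncovuv⟩, huA⟩ := hSUA
    have huS : u ∉ S := Set.disjoint_left.mp hdisjAS huA
    -- removing u must also break (1)
    have hfailu : ¬ ok1 G (Ω \ {u}) := by
      intro hok'
      have hmemS : S ⊆ Ω \ {u} := fun s hs => ⟨hSΩ hs, fun hc => huS (hc ▸ hs)⟩
      have hmem : S ⊆ Ω \ {u} ∧ Ω \ {u} ⊆ S ∪ A ∧ ((Ω \ {u}) ∩ A).Nonempty ∧
          ok1 G (Ω \ {u}) :=
        ⟨hmemS, Set.diff_subset.trans hΩSA, ⟨v, ⟨hv, fun hc => huv (Set.mem_singleton_iff.mp hc).symm⟩, hvA⟩, hok'⟩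
      have hge := hmin _ hmem
      have hsub : uncSet G (Ω \ {u}) ⊂ uncSet G Ω := by
        refine ⟨uncSet_removal_subset, fun hcontra => ?_⟩
        have h1 : (u, v) ∈ uncSet G (Ω \ {u}) :=
          hcontra ⟨huΩ, hv, huv, hnadjuv, hncovuv⟩
        exact h1.1.2 rfl
      have hcard := Set.ncard_lt_ncard hsub (Set.toFinite _)
      have hlt := lex_measure_lt (n := n) (c := Ω.ncard) (c' := (Ω \ {u}).ncard)
        (ncard_le_card _) (Or.inl hcard)
      omega
    obtain ⟨Du, hDu, hDufull, huDu⟩ := removal_analysis huΩ hv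
      (fun hc => huv hc.symm) (fun hc => hnadjuv hc.symm)
      (fun hc => hncovuv (covers_symm hc)) hfailu
    -- SU = {u}
    have hSUsing : ∀ y, y ∈ Ω → y ≠ v → ¬ G.Adj y v → ¬ covers G Ω y v → y = u := by
      intro y hy hyv hynadj hyncov
      by_contra hyu
      refine hyncov ⟨Du, hDu, ?_, ?_⟩
      · rw [hDufull]; exact ⟨hy, hyu⟩
      · rw [hDufull]; exact ⟨hv, fun hc => huv (Set.mem_singleton_iff.mp hc).symm⟩
    set Y : Set V := Ω \ {u, v} with hY
    have hSY : S ⊆ Y := fun s hs => ⟨hSΩ hs, by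
      intro hc
      rw [Set.mem_insert_iff, Set.mem_singleton_iff] at hc
      rcases hc with rfl | rfl
      · exact huS hs
      · exact hvS hs⟩
    have hvout : v ∉ Ω \ {v} := fun hc => hc.2 rfl
    set M : Set V := compOut G (Ω \ {v}) v with hM
    have hMcomp := isCompOutside_compOut (G := G) hvout
    have hvM : v ∈ M := mem_compOut_self _ _ _
    have huM : u ∉ M := fun hc =>
      (Set.disjoint_left.mp hMcomp.2.1) hc ⟨huΩ, huv⟩
    -- nbhdSet M = Y
    have hMY : nbhdSet G M = Y := by
      rw [hM, M_nbhd hv]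
      ext x
      simp only [Set.mem_setOf_eq, hY, Set.mem_diff, Set.mem_insert_iff,
        Set.mem_singleton_iff]
      constructor
      · rintro ⟨hxΩ, hxv, hcase⟩
        refine ⟨hxΩ, ?_⟩
        rintro (rfl | rfl)
        · rcases hcase with h | h
          · exact hnadjuv h
          · exact hncovuv h
        · exact hxv rfl
      · rintro ⟨hxΩ, hor⟩
        have hxv : x ≠ v := fun hc => hor (Or.inr hc)
        refine ⟨hxΩ, hxv, ?_⟩
        by_contra hcon
        push_neg at hcon
        exact hor (Or.inl (hSUsing x hxΩ hxv hcon.1 hcon.2))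
    -- M is a full component of Y
    have hMcompY : IsCompOutside G Y M := by
      refine ⟨hMcomp.1, ?_, hMcomp.2.2.1, ?_⟩
      · refine Set.disjoint_left.mpr fun x hx hxY => ?_
        exact (Set.disjoint_left.mp hMcomp.2.1) hx
          ⟨hxY.1, fun hc => hxY.2 (by rw [Set.mem_insert_iff]; exact Or.inr hc)⟩
      · intro a ha y hy hyY hadj
        exact hyY (hMY ▸ (⟨hy, a, ha, hadj⟩ : y ∈ nbhdSet G M))
    -- the component of u outside Y
    have huY : u ∉ Y := fun hc => hc.2 (by rw [Set.mem_insert_iff]; exact Or.inl rfl)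
    set Ku : Set V := compOut G Y u with hKu
    have hKucomp := isCompOutside_compOut (G := G) (S := Y) huY
    have hDdisjY : Disjoint D Y := Set.disjoint_of_subset_right Set.diff_subset hDdisjΩ
    have hDKu : D ⊆ Ku := by
      have huN : u ∈ nbhdSet G D := by rw [hDfull]; exact ⟨huΩ, huv⟩
      obtain ⟨_, d, hdD, hdu⟩ := huN
      have hdKu : d ∈ Ku := compOut_closed huY (mem_compOut_self _ _ _)
        (Set.disjoint_left.mp hDdisjY hdD) hdu.symm
      exact hKucomp.subset_of_connected hD.2.2.1 hDdisjY hdD hdKu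
    have hKufull : nbhdSet G Ku = Y := by
      apply Set.eq_of_subset_of_subset hKucomp.nbhd_subset
      intro y hyY
      have hyN : y ∈ nbhdSet G D := by
        rw [hDfull]
        exact ⟨hyY.1, fun hc => hyY.2 (by rw [Set.mem_insert_iff]; exact Or.inr hc)⟩
      obtain ⟨_, d, hdD, hdy⟩ := hyN
      exact ⟨fun hc => (Set.disjoint_left.mp hKucomp.2.1) hc hyY, d, hDKu hdD, hdy⟩
    have hMKu : M ≠ Ku := fun hc => huM (hc ▸ mem_compOut_self G Y u)
    -- recurse on the smaller block (Y, M)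
    have hMdisjS : Disjoint M S := by
      refine Set.disjoint_left.mpr fun x hx hxS => ?_
      exact (Set.disjoint_left.mp hMcomp.2.1) hx ⟨hSΩ hxS, fun hc => hvS (hc ▸ hxS)⟩
    have hMA : M ⊆ A := hA.1.subset_of_connected hMcomp.2.2.1 hMdisjS hvM hvA
    have hMssub : M ⊂ A := ⟨hMA, fun hc => huM (hc huA)⟩
    have hcard : M.ncard < A.ncard := Set.ncard_lt_ncard hMssub (Set.toFinite _)
    have hmeas' : G.edgeSet.ncard * (n + 1) + M.ncard < N := by omega
    obtain ⟨Ωs, hΩspmc, hYΩs, hΩsYM⟩ := IH _ hmeas' G Y M Ku le_rfl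
      ⟨hMcompY, hMY⟩ ⟨isCompOutside_compOut huY, hKufull⟩ hMKu
    refine ⟨Ωs, hΩspmc, hSY.trans hYΩs, hΩsYM.trans ?_⟩
    intro x hx
    rcases hx with hx | hx
    · exact hΩSA hx.1
    · exact Set.mem_union_right S (hMA hx)
  · -- case (b): all uncovered partners of v lie in S; delete v
    set G' : SimpleGraph V := sideG G {v} with hG'
    obtain ⟨d₀', hd₀'D⟩ := hD.1
    -- we use d₀ ∈ D ∩ A found above
    have hvd₀ : d₀ ≠ v := fun hc => hvD (hc ▸ hd₀D)
    set Ct : Set V := compOut G' S d₀ with hCt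
    have hCtcomp := isCompOutside_compOut (G := G') (S := S) hd₀S
    have hDconn' : (G'.induce D).Connected := by
      rw [hG', delG_induce_eq hvD]; exact hD.2.2.1
    have hDCt : D ⊆ Ct := hCtcomp.subset_of_connected hDconn' hDdisjS hd₀D
      (mem_compOut_self _ _ _)
    have hCtA : Ct ⊆ A := by
      have h1 : Ct ⊆ compOut G S d₀ := by
        rw [hCt, hG']
        exact compOut_mono_graph delG_le S d₀
      rw [hA.1.eq_compOut hd₀A]
      exact h1
    have hvCt : v ∉ Ct := by
      intro hc
      have := delG_comp_mem_v hCtcomp hc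
      exact hvd₀ (by
        have : d₀ ∈ ({v} : Set V) := this ▸ mem_compOut_self G' S d₀
        exact Set.mem_singleton_iff.mp this)
    -- Ct is a full component of S in G'
    have hCtfull : nbhdSet G' Ct = S := by
      apply Set.eq_of_subset_of_subset hCtcomp.nbhd_subset
      intro s hs
      have hsv : s ≠ v := fun hc => hvS (hc ▸ hs)
      have hsN : s ∈ nbhdSet G D := by rw [hDfull]; exact ⟨hSΩ hs, hsv⟩
      obtain ⟨hsD, d, hdD, hds⟩ := hsN
      refine ⟨fun hc => (Set.disjoint_left.mp hCtcomp.2.1) hc hs, d, hDCt hdD, ?_⟩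
      rw [hG', delG_adj]
      exact ⟨hds, fun hc => hvD (hc ▸ hdD), hsv⟩
    -- B is a full component of S in G'
    have hdisjBA : Disjoint B A := by
      refine Set.disjoint_left.mpr fun x hxB hxA => hAB ?_
      exact hA.1.eq_of_mem hB.1 hxA hxB
    have hvB : v ∉ B := Set.disjoint_left.mp hdisjBA.symm hvA
    have hvNB : v ∉ nbhdSet G B := fun hc => hvS (hB.2 ▸ hc)
    have hBfull' : IsFullComp G' S B := by
      refine ⟨delG_comp_of_comp hB.1 hvB, ?_⟩
      rw [hG', delG_nbhdSet hvB, hB.2, Set.diff_singleton_eq_self hvS]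
    have hCtB : Ct ≠ B := by
      intro hc
      exact (Set.disjoint_left.mp hdisjBA.symm) hd₀A (hc ▸ mem_compOut_self G' S d₀)
    -- measure decreases: v has an edge
    obtain ⟨a₁, ha₁, b₁, hb₁, hvb₁⟩ := exists_adj_out hA.1.2.2.1
      (Set.singleton_subset_iff.mpr hvA) ⟨v, rfl⟩ ⟨w₀, hw₀.2, fun hc => hw₀v
        (Set.mem_singleton_iff.mp hc)⟩
    have ha₁v : a₁ = v := Set.mem_singleton_iff.mp ha₁
    have hElt : G'.edgeSet.ncard < G.edgeSet.ncard := delG_edge_lt (ha₁v ▸ hvb₁)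
    have hmeas' : G'.edgeSet.ncard * (n + 1) + Ct.ncard < N := by
      have h1 : Ct.ncard ≤ n := ncard_le_card _
      have h2 : G'.edgeSet.ncard * (n+1) + Ct.ncard < (G'.edgeSet.ncard + 1) * (n+1) := by
        have : G'.edgeSet.ncard * (n+1) + Ct.ncard < G'.edgeSet.ncard * (n+1) + (n+1) := by
          omega
        calc G'.edgeSet.ncard * (n+1) + Ct.ncard
            < G'.edgeSet.ncard * (n+1) + (n+1) := this
          _ = (G'.edgeSet.ncard + 1) * (n+1) := by ring
      have h3 : (G'.edgeSet.ncard + 1) * (n+1) ≤ G.edgeSet.ncard * (n+1) :=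
        Nat.mul_le_mul_right _ hElt
      have h4 : G.edgeSet.ncard * (n+1) ≤ N := le_trans (Nat.le_add_right _ _) hmeas
      omega
    obtain ⟨Ωt, hΩtpmc, hSΩt, hΩtSC⟩ := IH _ hmeas' G' S Ct B le_rfl
      ⟨hCtcomp, hCtfull⟩ hBfull' hCtB
    have hvΩt : v ∉ Ωt := by
      intro hc
      rcases hΩtSC hc with h | h
      · exact hvS h
      · exact hvCt h
    have hΩtSA : Ωt ⊆ S ∪ A := by
      intro x hx
      rcases hΩtSC hx with h | h
      · exact Set.mem_union_left _ h
      · exact Set.mem_union_right _ (hCtA h)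
    by_cases hFfull : nbhdSet G (compOut G Ωt v) = Ωt
    · refine ⟨Ωt ∪ {v}, lift_pmc_eq hvΩt hΩtpmc hFfull,
        hSΩt.trans Set.subset_union_left, ?_⟩
      intro x hx
      rcases hx with hx | hx
      · exact hΩtSA hx
      · exact Set.mem_union_right _ ((Set.mem_singleton_iff.mp hx) ▸ hvA)
    · exact ⟨Ωt, lift_pmc_ne hvΩt hΩtpmc hFfull, hSΩt, hΩtSA⟩


/-- Every minimal separator is contained in some potential maximal clique. -/
theorem stmt_19 [Fintype V] (G : SimpleGraph V) (S : Set V) (hS : IsMinSep G S) :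
    ∃ Ω : Set V, IsPMC G Ω ∧ S ⊆ Ω := by
  obtain ⟨A, B, hAB, hA, hB⟩ := hS
  obtain ⟨Ω, h1, h2, _⟩ := block_pmc
    (G.edgeSet.ncard * (Fintype.card V + 1) + A.ncard) G S A B le_rfl hA hB hAB
  exact ⟨Ω, h1, h2⟩
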